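/- The ring M₂(ℤ) of 2×2 integer matrices is not SSP: there exist two direct summands of M₂(ℤ) as a right module over itself whose sum is not a direct summand. -/

import Mathlib

open Matrix MulOpposite

namespace Stmt15Aux

abbrev R2 := Matrix (Fin 2) (Fin 2) ℤ

lemma smul_apply' (c : R2ᵐᵒᵖ) (A : R2) (i j : Fin 2) :
    (c • A) i j = ∑ k, A i k * c.unop k j := by
  rw [MulOpposite.smul_eq_mul_unop, Matrix.mul_apply]

/-- matrices with row 1 zero -/
def p : Submodule R2ᵐᵒᵖ R2 where
  carrier := {A | ∀ j, A 1 j = 0}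
  add_mem' := by intro a b ha hb j; simp [Matrix.add_apply, ha j, hb j]
  zero_mem' := by intro j; rfl
  smul_mem' := by
    intro c A hA j
    rw [smul_apply']
    simp [hA 0, hA 1]

/-- matrices with row 0 zero -/
def r : Submodule R2ᵐᵒᵖ R2 where
  carrier := {A | ∀ j, A 0 j = 0}
  add_mem' := by intro a b ha hb j; simp [Matrix.add_apply, ha j, hb j]
  zero_mem' := by intro j; rfl
  smul_mem' := by
    intro c A hA j
    rw [smul_apply']
    simp [hA 0, hA 1]

/-- matrices with row 1 = 2 * row 0 -/
def q : Submodule R2ᵐᵒᵖ R2 where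
  carrier := {A | ∀ j, A 1 j = 2 * A 0 j}
  add_mem' := by intro a b ha hb j; simp [Matrix.add_apply, ha j, hb j]; ring
  zero_mem' := by intro j; simp
  smul_mem' := by
    intro c A hA j
    rw [smul_apply', smul_apply', Finset.mul_sum]
    exact Finset.sum_congr rfl fun k _ => by rw [hA k]; ring

/-- matrices with row 1 entries even -/
def s : Submodule R2ᵐᵒᵖ R2 where
  carrier := {A | ∀ j, (2 : ℤ) ∣ A 1 j}
  add_mem' := by intro a b ha hb j; exact (ha j).add (hb j)
  zero_mem' := by intro j; exact dvd_zero 2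
  smul_mem' := by
    intro c A hA j
    rw [smul_apply']
    exact Finset.dvd_sum fun k _ => ((hA k).mul_right _)

lemma fin2_cases (i : Fin 2) : i = 0 ∨ i = 1 := by omega

lemma compl_p_r : IsCompl p r := by
  constructor
  · rw [disjoint_iff]
    ext A
    simp only [Submodule.mem_inf, Submodule.mem_bot]
    constructor
    · rintro ⟨hp, hr⟩
      ext i j
      rcases fin2_cases i with h | h <;> subst h
      · exact hr j
      · exact hp j
    · rintro rfl
      exact ⟨fun j => rfl, fun j => rfl⟩
  · rw [codisjoint_iff, eq_top_iff]
    intro A _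
    rw [Submodule.mem_sup]
    refine ⟨fun i j => if i = 0 then A i j else 0, fun j => by simp, 
            fun i j => if i = 0 then 0 else A i j, fun j => by simp, ?_⟩
    ext i j
    rcases fin2_cases i with h | h <;> subst h <;> exact (Matrix.add_apply _ _ _ _).trans (by simp)

lemma compl_q_r : IsCompl q r := by
  constructor
  · rw [disjoint_iff]
    ext A
    simp only [Submodule.mem_inf, Submodule.mem_bot]
    constructor
    · rintro ⟨hq, hr⟩
      ext i j
      rcases fin2_cases i with h | h <;> subst h
      · exact hr j
      · simp [hq j, hr j]
    · rintro rfl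
      exact ⟨fun j => by simp, fun j => rfl⟩
  · rw [codisjoint_iff, eq_top_iff]
    intro A _
    rw [Submodule.mem_sup]
    refine ⟨fun i j => if i = 0 then A 0 j else 2 * A 0 j, fun j => by simp, 
            fun i j => if i = 0 then 0 else A 1 j - 2 * A 0 j, fun j => by simp, ?_⟩
    ext i j
    rcases fin2_cases i with h | h <;> subst h <;> exact (Matrix.add_apply _ _ _ _).trans (by simp)

lemma sup_eq : p ⊔ q = s := by
  apply le_antisymm
  · apply sup_le
    · intro A hA j
      rw [hA j]
      exact dvd_zero 2
    · intro A hA j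
      rw [hA j]
      exact Dvd.intro _ rfl
  · intro A hA
    rw [Submodule.mem_sup]
    refine ⟨fun i j => if i = 0 then A 0 j - (A 1 j / 2) else 0, fun j => by simp, 
            fun i j => if i = 0 then A 1 j / 2 else A 1 j, fun j => ?_, ?_⟩
    · show A 1 j = 2 * (A 1 j / 2)
      exact (Int.mul_ediv_cancel' (hA j)).symm
    · ext i j
      rcases fin2_cases i with h | h <;> subst h <;> exact (Matrix.add_apply _ _ _ _).trans (by simp)

/-- the standard basis matrix with a 1 in position (1,0) -/
def E : R2 := fun i j => if i = 1 ∧ j = 0 then 1 else 0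

lemma not_summand_s : ¬ ∃ w : Submodule R2ᵐᵒᵖ R2, IsCompl s w := by
  rintro ⟨w, hw⟩
  -- E = x + y with x ∈ s, y ∈ w
  have hE : E ∈ s ⊔ w := by rw [hw.sup_eq_top]; trivial
  rw [Submodule.mem_sup] at hE
  obtain ⟨x, hx, y, hy, hxy⟩ := hE
  -- E + E ∈ s
  have h2E : E + E ∈ s := by
    intro j
    show (2:ℤ) ∣ E 1 j + E 1 j
    exact ⟨E 1 j, by ring⟩
  -- y + y = (E + E) - (x + x) ∈ s ⊓ w = ⊥
  have h2y : y + y ∈ s ⊓ w := by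
    constructor
    · have hyy : y + y = (E + E) - (x + x) := by rw [← hxy]; abel
      rw [hyy]
      exact s.sub_mem h2E (s.add_mem hx hx)
    · exact w.add_mem hy hy
  rw [hw.inf_eq_bot, Submodule.mem_bot] at h2y
  have hy0 : y = 0 := by
    funext i j
    have h := congrFun (congrFun h2y i) j
    have h' : y i j + y i j = 0 := h
    show y i j = 0
    omega
  -- then E = x ∈ s, contradiction at entry (1,0)
  rw [hy0, add_zero] at hxy
  have := hx 0
  rw [hxy] at this
  simp [E] at this

theorem stmt15' :
    ∃ p q : Submodule (Matrix (Fin 2) (Fin 2) ℤ)ᵐᵒᵖ (Matrix (Fin 2) (Fin 2) ℤ),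
      (∃ c, IsCompl p c) ∧ (∃ c, IsCompl q c) ∧ ¬ ∃ c, IsCompl (p ⊔ q) c := by
  refine ⟨p, q, ⟨r, compl_p_r⟩, ⟨r, compl_q_r⟩, ?_⟩
  rw [sup_eq]
  exact not_summand_s

end Stmt15Aux

def IsSummand {R M : Type*} [Ring R] [AddCommGroup M] [Module R M]
    (p : Submodule R M) : Prop :=
  ∃ q : Submodule R M, IsCompl p q

theorem stmt15 :
    ∃ p q : Submodule (Matrix (Fin 2) (Fin 2) ℤ)ᵐᵒᵖ (Matrix (Fin 2) (Fin 2) ℤ),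
      IsSummand p ∧ IsSummand q ∧ ¬ IsSummand (p ⊔ q) := by
  exact Stmt15Aux.stmt15'
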